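/- arXiv:1605.00087 — 3 statements merged into one kernel-verified Lean document; each statement's English description precedes it below -/
import Mathlib

section
/- (Comparison principle) Let 0 < q < 1, T > 0, let v, w : [0,T] → ℝ be continuous, and let g : [0,T] × ℝ → ℝ be continuous and nondecreasing in its second variable for each fixed t ∈ [0,T]. Assume (i) v(t) ≤ v(0) + (1/Γ(q)) ∫_0^t (t-s)^(q-1) g(s, v(s)) ds for all t ∈ [0,T], (ii) w(t) ≥ w(0) + (1/Γ(q)) ∫_0^t (t-s)^(q-1) g(s, w(s)) ds for all t ∈ [0,T], and (iii) v(0) < w(0). Then v(t) < w(t) for all t ∈ [0,T]. -/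
open Real Set intervalIntegral

/-- Comparison principle for fractional integral inequalities: if `v` is a subsolution and `w`
a supersolution of the fractional Volterra equation with kernel nondecreasing in the state, and
`v(0) < w(0)`, then `v(t) < w(t)` for all `t ∈ [0,T]`. -/
theorem fractional_comparison_principle
    (q T : ℝ) (hq : q ∈ Set.Ioo (0 : ℝ) 1) (hT : 0 < T)
    (v w : ℝ → ℝ)
    (hv : ContinuousOn v (Set.Icc 0 T)) (hw : ContinuousOn w (Set.Icc 0 T))
    (g : ℝ → ℝ → ℝ)
    (hg : ContinuousOn (fun p : ℝ × ℝ => g p.1 p.2) (Set.Icc 0 T ×ˢ (Set.univ : Set ℝ)))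
    (hmono : ∀ t ∈ Set.Icc (0 : ℝ) T, ∀ x y : ℝ, x ≤ y → g t x ≤ g t y)
    (hvle : ∀ t ∈ Set.Icc (0 : ℝ) T,
      v t ≤ v 0 + (1 / Real.Gamma q) * ∫ s in (0 : ℝ)..t, (t - s) ^ (q - 1) * g s (v s))
    (hwge : ∀ t ∈ Set.Icc (0 : ℝ) T,
      w t ≥ w 0 + (1 / Real.Gamma q) * ∫ s in (0 : ℝ)..t, (t - s) ^ (q - 1) * g s (w s))
    (h0 : v 0 < w 0) :
    ∀ t ∈ Set.Icc (0 : ℝ) T, v t < w t := by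
  obtain ⟨hq0, hq1⟩ := hq
  by_contra hcon
  push_neg at hcon
  obtain ⟨t0, ht0, hwv0⟩ := hcon
  set S : Set ℝ := {t | t ∈ Set.Icc 0 T ∧ w t ≤ v t} with hS
  have hSne : S.Nonempty := ⟨t0, ht0, hwv0⟩
  have hSbdd : BddBelow S := ⟨0, fun x hx => hx.1.1⟩
  have hSclosed : IsClosed S := by
    have hEq : S = Set.Icc 0 T ∩ (fun t => v t - w t) ⁻¹' Set.Ici 0 := by
      ext t
      simp [hS, sub_nonneg, and_comm]
    rw [hEq]
    exact (hv.sub hw).preimage_isClosed_of_isClosed isClosed_Icc isClosed_Ici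
  set t₁ := sInf S with ht₁def
  have ht₁S : t₁ ∈ S := hSclosed.csInf_mem hSne hSbdd
  obtain ⟨ht₁Icc, hwt₁⟩ := ht₁S
  have ht₁pos : 0 < t₁ := by
    rcases lt_or_eq_of_le ht₁Icc.1 with h | h
    · exact h
    · exact absurd (h ▸ hwt₁) (not_le.mpr h0)
  have hlt : ∀ s ∈ Set.Ico (0 : ℝ) t₁, v s < w s := by
    intro s hs
    by_contra h
    push_neg at h
    have hsS : s ∈ S := ⟨⟨hs.1, hs.2.le.trans ht₁Icc.2⟩, h⟩
    exact absurd (csInf_le hSbdd hsS) (not_le.mpr hs.2)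
  have hΓ : 0 < Real.Gamma q := Real.Gamma_pos_of_pos hq0
  have hc : 0 < 1 / Real.Gamma q := by positivity
  -- kernel integrability
  have hK : IntervalIntegrable (fun s => (t₁ - s) ^ (q - 1)) MeasureTheory.volume 0 t₁ := by
    have h1 : IntervalIntegrable (fun x : ℝ => x ^ (q - 1)) MeasureTheory.volume 0 t₁ :=
      intervalIntegral.intervalIntegrable_rpow' (by linarith)
    exact (IntervalIntegrable.symm (by simpa using h1.comp_sub_left t₁))
  have hsubIcc : Set.Icc 0 t₁ ⊆ Set.Icc 0 T := Set.Icc_subset_Icc le_rfl ht₁Icc.2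
  have hcont : ∀ u : ℝ → ℝ, ContinuousOn u (Set.Icc 0 T) →
      ContinuousOn (fun s => g s (u s)) (Set.Icc 0 t₁) := by
    intro u hu
    apply hg.comp (Continuous.continuousOn (by fun_prop) |>.prodMk ((hu.mono hsubIcc)))
    intro s hs
    exact ⟨hsubIcc hs, trivial⟩
  have hIv : IntervalIntegrable (fun s => (t₁ - s) ^ (q - 1) * g s (v s))
      MeasureTheory.volume 0 t₁ :=
    hK.mul_continuousOn (by rw [Set.uIcc_of_le ht₁pos.le]; exact hcont v hv)
  have hIw : IntervalIntegrable (fun s => (t₁ - s) ^ (q - 1) * g s (w s))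
      MeasureTheory.volume 0 t₁ :=
    hK.mul_continuousOn (by rw [Set.uIcc_of_le ht₁pos.le]; exact hcont w hw)
  have hintle : (∫ s in (0 : ℝ)..t₁, (t₁ - s) ^ (q - 1) * g s (v s))
      ≤ ∫ s in (0 : ℝ)..t₁, (t₁ - s) ^ (q - 1) * g s (w s) := by
    apply intervalIntegral.integral_mono_on ht₁pos.le hIv hIw
    intro s hs
    rcases eq_or_lt_of_le hs.2 with h | h
    · have : (t₁ - s : ℝ) ^ (q - 1) = 0 := by
        rw [h, sub_self, Real.zero_rpow (by linarith)]
      simp [this]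
    · have hker : (0 : ℝ) ≤ (t₁ - s) ^ (q - 1) :=
        Real.rpow_nonneg (by linarith) _
      exact mul_le_mul_of_nonneg_left
        (hmono s (hsubIcc ⟨hs.1, hs.2⟩) _ _ (hlt s ⟨hs.1, h⟩).le) hker
  have h1 := hvle t₁ ht₁Icc
  have h2 := hwge t₁ ht₁Icc
  have hfinal : v t₁ < w t₁ := by
    have := mul_le_mul_of_nonneg_left hintle hc.le
    linarith
  exact absurd hwt₁ (not_le.mpr hfinal)
end

section
/- (Divergence rate for solutions of 1-dim FDEs) Let α ∈ (0,1), T > 0, let f : [0,T] × ℝ → ℝ be continuous and satisfy the Lipschitz condition: there is a continuous function L : [0,T] → [0,∞) with |f(t,x) - f(t,y)| ≤ L(t)|x - y| for all t ∈ [0,T] and x, y ∈ ℝ. Let x₁, x₂ : [0,T] → ℝ be continuous solutions of the Volterra integral equation xᵢ(t) = xᵢ(0) + (1/Γ(α)) ∫_0^t (t-τ)^(α-1) f(τ, xᵢ(τ)) dτ for all t ∈ [0,T]. Then for every t ∈ [0,T]: |x₂(t) - x₁(t)| ≤ |x₂(0) - x₁(0)| · E_α((max_{0 ≤ τ ≤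 t} L(τ)) · t^α). -/
open Real Set intervalIntegral Filter MeasureTheory Topology

/-- The one-parameter Mittag-Leffler function `E_α(z) = ∑_{k=0}^∞ z^k / Γ(αk + 1)`. -/
noncomputable def mittagLeffler (α z : ℝ) : ℝ :=
  ∑' k : ℕ, z ^ k / Real.Gamma (α * k + 1)

/-- Real Beta integral at scale `s`. -/
lemma beta_scaled {a b s : ℝ} (ha : 0 < a) (hb : 0 < b) (hs : 0 < s) :
    ∫ τ in (0:ℝ)..s, τ ^ (a - 1) * (s - τ) ^ (b - 1)
      = s ^ (a + b - 1) * (Real.Gamma a * Real.Gamma b / Real.Gamma (a + b)) := by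
  have h1 := Complex.betaIntegral_scaled (a : ℂ) (b : ℂ) hs
  have h2 := Complex.Gamma_mul_Gamma_eq_betaIntegral
    (s := (a:ℂ)) (t := (b:ℂ)) (by simpa using ha) (by simpa using hb)
  have hab : ((a:ℂ) + b) = ((a + b : ℝ) : ℂ) := by push_cast; ring
  have hne : Complex.Gamma ((a:ℂ) + b) ≠ 0 := by
    rw [hab, Complex.Gamma_ofReal]
    exact_mod_cast (Real.Gamma_pos_of_pos (by positivity)).ne'
  have hB : Complex.betaIntegral a b
      = Complex.Gamma a * Complex.Gamma b / Complex.Gamma ((a:ℂ) + b) := by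
    rw [eq_div_iff hne]
    linear_combination -h2
  have hL : (∫ x in (0:ℝ)..s, (x : ℂ) ^ ((a:ℂ) - 1) * ((s : ℂ) - x) ^ ((b:ℂ) - 1))
      = ((∫ τ in (0:ℝ)..s, τ ^ (a - 1) * (s - τ) ^ (b - 1) : ℝ) : ℂ) := by
    rw [← intervalIntegral.integral_ofReal]
    refine intervalIntegral.integral_congr fun x hx => ?_
    rw [uIcc_of_le hs.le] at hx
    rw [Complex.ofReal_mul, Complex.ofReal_cpow hx.1, Complex.ofReal_cpow
      (by linarith [hx.2] : (0:ℝ) ≤ s - x)]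
    push_cast; ring
  rw [hL, hB] at h1
  have hR : ((s:ℂ)) ^ ((a:ℂ) + b - 1) = ((s ^ (a + b - 1) : ℝ) : ℂ) := by
    rw [Complex.ofReal_cpow hs.le]; push_cast; ring_nf
  rw [hR, hab, Complex.Gamma_ofReal, Complex.Gamma_ofReal, Complex.Gamma_ofReal] at h1
  exact_mod_cast h1

/-- The key fractional-integral computation. -/
lemma frac_int {α β s : ℝ} (hα : 0 < α) (hβ : 0 ≤ β) (hs : 0 < s) :
    ∫ τ in (0:ℝ)..s, (s - τ) ^ (α - 1) * τ ^ β
      = s ^ (α + β) * (Real.Gamma α * Real.Gamma (β + 1) / Real.Gamma (α + β + 1)) := by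
  have h := beta_scaled (a := β + 1) (b := α) (by linarith) hα hs
  have e : ∀ τ : ℝ, τ ^ (β + 1 - 1) * (s - τ) ^ (α - 1) = (s - τ) ^ (α - 1) * τ ^ β := by
    intro τ; rw [show β + 1 - 1 = β by ring]; ring
  simp_rw [e] at h
  rw [h, show β + 1 + α - 1 = α + β by ring, show β + 1 + α = α + β + 1 by ring]
  ring

lemma summable_ML {α : ℝ} (hα : 0 < α) {z : ℝ} (hz : 0 ≤ z) :
    Summable (fun k : ℕ => z ^ k / Real.Gamma (α * k + 1)) := by
  -- choose m with 2 ≤ m and z < (m:ℝ)^α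
  obtain ⟨m₀, hm₀⟩ := exists_nat_gt (max 1 (z ^ (1/α)))
  set m : ℕ := m₀ + 2 with hm
  have hm1 : (1:ℝ) < m := by
    have := (le_max_left 1 (z ^ (1/α))).trans_lt hm₀
    rw [hm]; push_cast; linarith
  have hmz : z < (m:ℝ) ^ α := by
    have h1 : z ^ (1/α) < (m:ℝ) := by
      have := (le_max_right 1 (z ^ (1/α))).trans_lt hm₀
      rw [hm]; push_cast; linarith
    have h2 : (z ^ (1/α)) ^ α < (m:ℝ) ^ α :=
      Real.rpow_lt_rpow (Real.rpow_nonneg hz _) h1 hα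
    rwa [← Real.rpow_mul hz, one_div, inv_mul_cancel₀ hα.ne', Real.rpow_one] at h2
  have hmα_pos : (0:ℝ) < (m:ℝ) ^ α := Real.rpow_pos_of_pos (by linarith) α
  set r : ℝ := z / (m:ℝ) ^ α with hr
  have hr0 : 0 ≤ r := div_nonneg hz hmα_pos.le
  have hr1 : r < 1 := (div_lt_one hmα_pos).mpr hmz
  refine summable_of_isBigO_nat (summable_geometric_of_lt_one hr0 hr1) ?_
  refine Asymptotics.IsBigO.of_bound ((m:ℝ) ^ (m + 2)) ?_
  have hαK : ∀ᶠ k : ℕ in atTop, ((m:ℝ) + 2) ≤ α * k := by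
    filter_upwards [Filter.eventually_ge_atTop ⌈((m:ℝ)+2)/α⌉₊] with k hk
    have h1 : ((m:ℝ)+2)/α ≤ k := le_trans (Nat.le_ceil _) (by exact_mod_cast hk)
    rw [div_le_iff₀ hα] at h1; linarith [h1]
  filter_upwards [hαK] with k hk
  have hmc : (m:ℝ) = (m₀:ℝ) + 2 := by rw [hm]; push_cast; ring
  have hΓpos : 0 < Real.Gamma (α * k + 1) := Real.Gamma_pos_of_pos (by positivity)
  set n : ℕ := ⌊α * k⌋₊ with hn
  have hnm : m + 2 ≤ n := by
    apply Nat.le_floor; push_cast; linarith [hk, hmc]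
  have hn_le : (n:ℝ) ≤ α * k := Nat.floor_le (by positivity)
  have hn_gt : α * k < n + 1 := Nat.lt_floor_add_one _
  have hn1 : 1 ≤ n := by omega
  -- Gamma (α k + 1) ≥ (n-1)!
  have h1 : Real.Gamma (n:ℝ) ≤ Real.Gamma (α * k + 1) := by
    rcases eq_or_lt_of_le hn_le with h | h
    · rw [h]
      exact (Real.Gamma_strictMonoOn_Ici.monotoneOn (by simp; linarith)
        (by simp; linarith) (by linarith)).trans_eq rfl
    · exact (Real.Gamma_strictMonoOn_Ici.monotoneOn (a := (n:ℝ)) (b := α*k+1)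
        (by simp; exact_mod_cast by omega : (n:ℝ) ∈ Ici 2) (by simp; linarith)
        (by linarith)).trans_eq rfl
  have h2 : Real.Gamma (n:ℝ) = (Nat.factorial (n-1) : ℝ) := by
    have hc : ((n - 1 : ℕ):ℝ) + 1 = (n:ℝ) := by
      have := Nat.cast_sub hn1 (R := ℝ); push_cast at this ⊢; linarith [this]
    rw [← hc, Real.Gamma_nat_eq_factorial]
  -- (n-1)! ≥ m ^ (n-1-m)
  have h3 : ((m:ℝ)) ^ ((n-1-m : ℕ)) ≤ (Nat.factorial (n-1) : ℝ) := by
    have hnat : m ^ (n-1-m) ≤ Nat.factorial (n-1) := by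
      calc m ^ (n-1-m) ≤ (m+1) ^ (n-1-m) := Nat.pow_le_pow_left (by omega) _
        _ ≤ Nat.factorial m * (m+1) ^ (n-1-m) :=
            Nat.le_mul_of_pos_left _ (Nat.factorial_pos m)
        _ ≤ Nat.factorial (m + (n-1-m)) := Nat.factorial_mul_pow_le_factorial
        _ = Nat.factorial (n-1) := by congr 1; omega
    exact_mod_cast hnat
  have h4 : (m:ℝ) ^ (α * k - ((m:ℝ)+2)) ≤ (m:ℝ) ^ ((n-1-m : ℕ)) := by
    rw [← Real.rpow_natCast (m:ℝ) (n-1-m)]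
    apply Real.rpow_le_rpow_of_exponent_le hm1.le
    have : ((n-1-m : ℕ) : ℝ) = (n:ℝ) - 1 - m := by
      have h5 := Nat.cast_sub (show m ≤ n - 1 by omega) (R := ℝ)
      have h6 := Nat.cast_sub (show 1 ≤ n by omega) (R := ℝ)
      push_cast at h5 h6 ⊢; linarith
    rw [this]; linarith
  have key : ((m:ℝ) ^ α) ^ k ≤ (m:ℝ) ^ (m + 2) * Real.Gamma (α * k + 1) := by
    have e1 : ((m:ℝ) ^ α) ^ k = (m:ℝ) ^ (α * k) := by
      rw [← Real.rpow_natCast ((m:ℝ)^α) k, ← Real.rpow_mul (by positivity)]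
    have e2 : (m:ℝ) ^ (α * k - ((m:ℝ)+2)) = (m:ℝ) ^ (α*k) / (m:ℝ) ^ ((m:ℝ)+2) := by
      rw [Real.rpow_sub (by linarith)]
    have e3 : (m:ℝ) ^ ((m:ℝ)+2) = (m:ℝ) ^ (m+2) := by
      rw [show ((m:ℝ)+2) = ((m+2 : ℕ) : ℝ) by push_cast; ring, Real.rpow_natCast]
    have hchain : (m:ℝ) ^ (α * k - ((m:ℝ)+2)) ≤ Real.Gamma (α * k + 1) := by
      calc (m:ℝ) ^ (α * k - ((m:ℝ)+2)) ≤ (m:ℝ) ^ ((n-1-m : ℕ)) := h4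
        _ ≤ (Nat.factorial (n-1) : ℝ) := h3
        _ = Real.Gamma (n:ℝ) := h2.symm
        _ ≤ _ := h1
    rw [e2, e3, div_le_iff₀ (by positivity)] at hchain
    rw [e1]; linarith [hchain]
  -- final bound
  have hpow_pos : (0:ℝ) < ((m:ℝ) ^ α) ^ k := by positivity
  rw [Real.norm_eq_abs, Real.norm_eq_abs, abs_of_nonneg (by positivity),
    abs_of_nonneg (by positivity), hr, div_pow, ← mul_div_assoc, div_le_div_iff₀ hΓpos hpow_pos]
  calc z ^ k * ((m:ℝ) ^ α) ^ k ≤ z ^ k * ((m:ℝ) ^ (m+2) * Real.Gamma (α * k + 1)) :=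
        mul_le_mul_of_nonneg_left key (pow_nonneg hz k)
    _ = (m:ℝ) ^ (m+2) * z ^ k * Real.Gamma (α * k + 1) := by ring

set_option maxHeartbeats 1000000 in
/-- Divergence rate for solutions of one-dimensional Caputo FDEs (in Volterra integral form):
`|x₂(t) - x₁(t)| ≤ |x₂(0) - x₁(0)| E_α((max_{0 ≤ τ ≤ t} L(τ)) t^α)`. -/
theorem divergence_rate_1dim
    (α T : ℝ) (hα : α ∈ Set.Ioo (0 : ℝ) 1) (hT : 0 < T)
    (f : ℝ → ℝ → ℝ)
    (hf : ContinuousOn (fun p : ℝ × ℝ => f p.1 p.2) (Set.Icc 0 T ×ˢ (Set.univ : Set ℝ)))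
    (L : ℝ → ℝ) (hL : ContinuousOn L (Set.Icc 0 T))
    (hLnonneg : ∀ t ∈ Set.Icc (0 : ℝ) T, 0 ≤ L t)
    (hLip : ∀ t ∈ Set.Icc (0 : ℝ) T, ∀ x y : ℝ, |f t x - f t y| ≤ L t * |x - y|)
    (x₁ x₂ : ℝ → ℝ)
    (hx₁ : ContinuousOn x₁ (Set.Icc 0 T)) (hx₂ : ContinuousOn x₂ (Set.Icc 0 T))
    (hvolt₁ : ∀ t ∈ Set.Icc (0 : ℝ) T,
      x₁ t = x₁ 0 + (1 / Real.Gamma α) * ∫ τ in (0 : ℝ)..t, (t - τ) ^ (α - 1) * f τ (x₁ τ))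
    (hvolt₂ : ∀ t ∈ Set.Icc (0 : ℝ) T,
      x₂ t = x₂ 0 + (1 / Real.Gamma α) * ∫ τ in (0 : ℝ)..t, (t - τ) ^ (α - 1) * f τ (x₂ τ)) :
    ∀ t ∈ Set.Icc (0 : ℝ) T,
      |x₂ t - x₁ t| ≤ |x₂ 0 - x₁ 0| * mittagLeffler α (sSup (L '' Set.Icc 0 t) * t ^ α) := by
  obtain ⟨hα0, hα1⟩ := hα
  have hΓα : 0 < Real.Gamma α := Real.Gamma_pos_of_pos hα0
  intro t ht
  obtain ⟨ht0, htT⟩ := ht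
  rcases eq_or_lt_of_le ht0 with rfl | htpos
  · -- t = 0
    have h0 : sSup (L '' Set.Icc (0:ℝ) 0) * (0:ℝ) ^ α = 0 := by
      rw [Real.zero_rpow hα0.ne', mul_zero]
    rw [h0]
    have hml : mittagLeffler α 0 = 1 := by
      rw [mittagLeffler, tsum_eq_single 0 (fun k hk => by simp [zero_pow hk])]
      simp [Real.Gamma_one]
    rw [hml, mul_one]
  · -- 0 < t
    set M := sSup (L '' Set.Icc (0:ℝ) t) with hMdef
    have hsub : Set.Icc (0:ℝ) t ⊆ Set.Icc (0:ℝ) T := Set.Icc_subset_Icc le_rfl htT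
    have hLM : ∀ τ ∈ Set.Icc (0:ℝ) t, L τ ≤ M := fun τ hτ =>
      le_csSup ((isCompact_Icc.image_of_continuousOn (hL.mono hsub)).bddAbove) ⟨τ, hτ, rfl⟩
    have hM0 : 0 ≤ M := le_trans (hLnonneg 0 ⟨le_rfl, hT.le⟩) (hLM 0 ⟨le_rfl, htpos.le⟩)
    set u : ℝ → ℝ := fun s => |x₂ s - x₁ s| with hu
    set A : ℝ := |x₂ 0 - x₁ 0| with hAdef
    have hA0 : 0 ≤ A := abs_nonneg _
    have hu_nonneg : ∀ s, 0 ≤ u s := fun s => abs_nonneg _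
    have hu_cont : ContinuousOn u (Set.Icc 0 t) := ((hx₂.sub hx₁).abs).mono hsub
    obtain ⟨C, hC⟩ := isCompact_Icc.exists_bound_of_continuousOn ((hx₂.sub hx₁).mono hsub)
    have hCu : ∀ s ∈ Set.Icc (0:ℝ) t, u s ≤ C := fun s hs => by
      simpa [hu, Real.norm_eq_abs] using hC s hs
    have hC0 : 0 ≤ C := le_trans (hu_nonneg 0) (hCu 0 ⟨le_rfl, htpos.le⟩)
    have hfx : ∀ x : ℝ → ℝ, ContinuousOn x (Set.Icc 0 T) →
        ContinuousOn (fun τ => f τ (x τ)) (Set.Icc 0 T) := fun x hx =>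
      by have := hf.comp (f := fun τ => (τ, x τ)) (s := Set.Icc 0 T) (continuousOn_id.prodMk hx) (fun τ hτ => ⟨hτ, Set.mem_univ _⟩); exact this
    have hcτα : Continuous fun τ : ℝ => τ ^ α :=
      continuous_iff_continuousAt.mpr fun x => Real.continuousAt_rpow_const x α (Or.inr hα0.le)
    have hIrpow : ∀ s : ℝ, IntervalIntegrable (fun τ => (s - τ) ^ (α - 1)) volume 0 s := by
      intro s
      have h := (intervalIntegrable_rpow' (show (-1:ℝ) < α - 1 by linarith)
        (a := 0) (b := s)).comp_sub_left s
      simpa using h.symm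
    have hInt : ∀ s : ℝ, 0 ≤ s → ∀ g : ℝ → ℝ, ContinuousOn g (Set.Icc 0 s) →
        IntervalIntegrable (fun τ => (s - τ) ^ (α - 1) * g τ) volume 0 s := by
      intro s hs g hg
      exact (hIrpow s).mul_continuousOn (by rwa [Set.uIcc_of_le hs])
    -- Step A : the basic integral inequality
    have stepA : ∀ s ∈ Set.Icc (0:ℝ) t,
        u s ≤ A + (M / Real.Gamma α) * ∫ τ in (0:ℝ)..s, (s - τ) ^ (α - 1) * u τ := by
      intro s hs
      have hs0 : (0:ℝ) ≤ s := hs.1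
      have hsT : s ∈ Set.Icc (0:ℝ) T := hsub hs
      have hIccs : Set.Icc (0:ℝ) s ⊆ Set.Icc (0:ℝ) t := Set.Icc_subset_Icc le_rfl hs.2
      have hIccsT : Set.Icc (0:ℝ) s ⊆ Set.Icc (0:ℝ) T := hIccs.trans hsub
      have hcont1 : ContinuousOn (fun τ => f τ (x₁ τ)) (Set.Icc 0 s) := (hfx x₁ hx₁).mono hIccsT
      have hcont2 : ContinuousOn (fun τ => f τ (x₂ τ)) (Set.Icc 0 s) := (hfx x₂ hx₂).mono hIccsT
      have hI1 : IntervalIntegrable (fun τ => (s - τ) ^ (α - 1) * f τ (x₁ τ)) volume 0 s :=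
        hInt s hs0 _ hcont1
      have hI2 : IntervalIntegrable (fun τ => (s - τ) ^ (α - 1) * f τ (x₂ τ)) volume 0 s :=
        hInt s hs0 _ hcont2
      have hIdiff : IntervalIntegrable
          (fun τ => (s - τ) ^ (α - 1) * (f τ (x₂ τ) - f τ (x₁ τ))) volume 0 s :=
        hInt s hs0 _ (hcont2.sub hcont1)
      have hdiff : x₂ s - x₁ s = (x₂ 0 - x₁ 0) + (1 / Real.Gamma α) *
          ∫ τ in (0:ℝ)..s, (s - τ) ^ (α - 1) * (f τ (x₂ τ) - f τ (x₁ τ)) := by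
        have e : (∫ τ in (0:ℝ)..s, (s - τ) ^ (α - 1) * (f τ (x₂ τ) - f τ (x₁ τ)))
            = (∫ τ in (0:ℝ)..s, (s - τ) ^ (α - 1) * f τ (x₂ τ))
              - ∫ τ in (0:ℝ)..s, (s - τ) ^ (α - 1) * f τ (x₁ τ) := by
          rw [← intervalIntegral.integral_sub hI2 hI1]
          congr 1; funext τ; ring
        rw [e, hvolt₂ s hsT, hvolt₁ s hsT]; ring
      have habs : u s ≤ A + (1 / Real.Gamma α) *
          ∫ τ in (0:ℝ)..s, |(s - τ) ^ (α - 1) * (f τ (x₂ τ) - f τ (x₁ τ))| := by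
        rw [hu]; simp only []
        rw [hdiff]
        refine (abs_add_le _ _).trans ?_
        rw [hAdef]
        gcongr
        rw [abs_mul, abs_of_pos (by positivity : (0:ℝ) < 1 / Real.Gamma α)]
        exact mul_le_mul_of_nonneg_left
          (intervalIntegral.abs_integral_le_integral_abs hs0) (by positivity)
      refine habs.trans ?_
      have hmono : (∫ τ in (0:ℝ)..s, |(s - τ) ^ (α - 1) * (f τ (x₂ τ) - f τ (x₁ τ))|)
          ≤ ∫ τ in (0:ℝ)..s, (s - τ) ^ (α - 1) * (M * u τ) := by
        refine intervalIntegral.integral_mono_on hs0 hIdiff.abs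
          (hInt s hs0 _ (continuousOn_const.mul (hu_cont.mono hIccs))) fun τ hτ => ?_
        have hpos : 0 ≤ (s - τ) ^ (α - 1) := Real.rpow_nonneg (by linarith [hτ.2]) _
        rw [abs_mul, abs_of_nonneg hpos]
        refine mul_le_mul_of_nonneg_left ?_ hpos
        calc |f τ (x₂ τ) - f τ (x₁ τ)| ≤ L τ * |x₂ τ - x₁ τ| :=
              hLip τ (hIccsT hτ) _ _
          _ ≤ M * u τ := by
              rw [hu]
              exact mul_le_mul_of_nonneg_right (hLM τ (hIccs hτ)) (abs_nonneg _)
      have e2 : (∫ τ in (0:ℝ)..s, (s - τ) ^ (α - 1) * (M * u τ))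
          = M * ∫ τ in (0:ℝ)..s, (s - τ) ^ (α - 1) * u τ := by
        rw [← intervalIntegral.integral_const_mul]
        congr 1; funext τ; ring
      have := mul_le_mul_of_nonneg_left hmono (by positivity : (0:ℝ) ≤ 1 / Real.Gamma α)
      rw [e2] at this
      calc A + (1 / Real.Gamma α) * ∫ τ in (0:ℝ)..s,
            |(s - τ) ^ (α - 1) * (f τ (x₂ τ) - f τ (x₁ τ))|
          ≤ A + (1 / Real.Gamma α) * (M * ∫ τ in (0:ℝ)..s, (s - τ) ^ (α - 1) * u τ) := by
            linarith
        _ = A + (M / Real.Gamma α) * ∫ τ in (0:ℝ)..s, (s - τ) ^ (α - 1) * u τ := by ring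
    -- Step B : the iteration
    have key : ∀ n : ℕ, ∀ s ∈ Set.Icc (0:ℝ) t,
        u s ≤ A * (∑ k ∈ Finset.range n, (M * s ^ α) ^ k / Real.Gamma (α * k + 1))
              + C * ((M * s ^ α) ^ n / Real.Gamma (α * n + 1)) := by
      intro n
      induction n with
      | zero =>
        intro s hs
        simpa [Real.Gamma_one] using hCu s hs
      | succ n ih =>
        intro s hs
        rcases eq_or_lt_of_le hs.1 with hs0 | hspos
        · -- s = 0
          subst hs0
          have hzero : M * (0:ℝ) ^ α = 0 := by rw [Real.zero_rpow hα0.ne', mul_zero]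
          rw [hzero]
          have hsum1 : (∑ k ∈ Finset.range (n+1), (0:ℝ) ^ k / Real.Gamma (α * k + 1)) = 1 := by
            rw [Finset.sum_eq_single 0 (fun k _ hk0 => by simp [zero_pow hk0])
              (fun h => absurd (Finset.mem_range.mpr n.succ_pos) h)]
            simp [Real.Gamma_one]
          rw [hsum1, zero_pow (Nat.succ_ne_zero n), zero_div, mul_zero, mul_one, add_zero]
        · -- 0 < s
          have hs0 : (0:ℝ) ≤ s := hs.1
          have hIccs : Set.Icc (0:ℝ) s ⊆ Set.Icc (0:ℝ) t := Set.Icc_subset_Icc le_rfl hs.2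
          set G : ℝ → ℝ := fun τ =>
            A * (∑ k ∈ Finset.range n, (M * τ ^ α) ^ k / Real.Gamma (α * k + 1))
              + C * ((M * τ ^ α) ^ n / Real.Gamma (α * n + 1)) with hG
          have hGc : Continuous G := by
            refine Continuous.add (continuous_const.mul ?_)
              (continuous_const.mul (((continuous_const.mul hcτα).pow n).div_const _))
            exact continuous_finset_sum _ fun k _ =>
              ((continuous_const.mul hcτα).pow k).div_const _
          -- elementary rpow identities
          have hpowτ : ∀ (k : ℕ) (τ : ℝ), 0 ≤ τ → (M * τ ^ α) ^ k = M ^ k * τ ^ (α * k) := by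
            intro k τ hτ
            rw [mul_pow, ← Real.rpow_natCast (τ ^ α) k, ← Real.rpow_mul hτ]
          -- the basic per-term integral
          have hIk : ∀ k : ℕ, (∫ τ in (0:ℝ)..s, (s - τ) ^ (α - 1)
                * ((M * τ ^ α) ^ k / Real.Gamma (α * k + 1)))
              = M ^ k * s ^ (α * ((k:ℝ) + 1)) * Real.Gamma α
                  / Real.Gamma (α * ((k:ℝ) + 1) + 1) := by
            intro k
            have hcong : Set.EqOn
                (fun τ => (s - τ) ^ (α - 1) * ((M * τ ^ α) ^ k / Real.Gamma (α * k + 1)))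
                (fun τ => (M ^ k / Real.Gamma (α * k + 1)) * ((s - τ) ^ (α - 1) * τ ^ (α * k)))
                (Set.uIcc 0 s) := by
              intro τ hτ
              rw [Set.uIcc_of_le hs0] at hτ
              simp only []
              rw [hpowτ k τ hτ.1]; ring
            rw [intervalIntegral.integral_congr hcong, intervalIntegral.integral_const_mul,
              frac_int hα0 (by positivity : (0:ℝ) ≤ α * (k:ℝ)) hspos]
            have hΓk : Real.Gamma (α * k + 1) ≠ 0 :=
              (Real.Gamma_pos_of_pos (by positivity)).ne'
            rw [show α + α * (k:ℝ) = α * ((k:ℝ) + 1) by ring,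
              show α * (k:ℝ) + 1 = α * ((k:ℝ)) + 1 by ring]
            field_simp
          -- value of the integral of the majorant
          have hIG : (∫ τ in (0:ℝ)..s, (s - τ) ^ (α - 1) * G τ)
              = A * (∑ k ∈ Finset.range n, M ^ k * s ^ (α * ((k:ℝ) + 1)) * Real.Gamma α
                    / Real.Gamma (α * ((k:ℝ) + 1) + 1))
                + C * (M ^ n * s ^ (α * ((n:ℝ) + 1)) * Real.Gamma α
                    / Real.Gamma (α * ((n:ℝ) + 1) + 1)) := by
            have e : (fun τ => (s - τ) ^ (α - 1) * G τ)
                = fun τ => (∑ k ∈ Finset.range n, A * ((s - τ) ^ (α - 1)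
                      * ((M * τ ^ α) ^ k / Real.Gamma (α * k + 1))))
                    + C * ((s - τ) ^ (α - 1) * ((M * τ ^ α) ^ n / Real.Gamma (α * n + 1))) := by
              funext τ
              rw [hG]
              simp only []
              have : (∑ k ∈ Finset.range n, A * ((s - τ) ^ (α - 1)
                  * ((M * τ ^ α) ^ k / Real.Gamma (α * k + 1))))
                  = (s - τ) ^ (α - 1) * (A * ∑ k ∈ Finset.range n,
                      (M * τ ^ α) ^ k / Real.Gamma (α * k + 1)) := by
                rw [Finset.mul_sum, Finset.mul_sum]
                exact Finset.sum_congr rfl fun k _ => by ring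
              rw [this]; ring
            have hIterm : ∀ k : ℕ, IntervalIntegrable (fun τ => A * ((s - τ) ^ (α - 1)
                * ((M * τ ^ α) ^ k / Real.Gamma (α * k + 1)))) volume 0 s := by
              intro k
              have h1 := (hInt s hs0 (fun τ => (M * τ ^ α) ^ k / Real.Gamma (α * k + 1))
                (((continuous_const.mul hcτα).pow k).div_const _).continuousOn).const_mul A
              simpa [mul_assoc] using h1
            have hIrem : IntervalIntegrable (fun τ => C * ((s - τ) ^ (α - 1)
                * ((M * τ ^ α) ^ n / Real.Gamma (α * n + 1)))) volume 0 s := by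
              have h1 := (hInt s hs0 (fun τ => (M * τ ^ α) ^ n / Real.Gamma (α * n + 1))
                (((continuous_const.mul hcτα).pow n).div_const _).continuousOn).const_mul C
              simpa [mul_assoc] using h1
            have h1' : IntervalIntegrable (fun τ => ∑ k ∈ Finset.range n,
                A * ((s - τ) ^ (α - 1) * ((M * τ ^ α) ^ k / Real.Gamma (α * k + 1))))
                volume 0 s := by
              have h0 := IntervalIntegrable.sum (Finset.range n) fun k _ => hIterm k
              rwa [show (∑ i ∈ Finset.range n, fun τ => A * ((s - τ) ^ (α - 1)
                  * ((M * τ ^ α) ^ i / Real.Gamma (α * i + 1))))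
                = (fun τ => ∑ k ∈ Finset.range n, A * ((s - τ) ^ (α - 1)
                  * ((M * τ ^ α) ^ k / Real.Gamma (α * k + 1)))) from
                funext fun τ => by simp] at h0
            rw [e, intervalIntegral.integral_add h1' hIrem,
              intervalIntegral.integral_finset_sum (fun k _ => hIterm k)]
            simp_rw [intervalIntegral.integral_const_mul, hIk]
            rw [← Finset.mul_sum]
          -- put everything together
          calc u s ≤ A + (M / Real.Gamma α) * ∫ τ in (0:ℝ)..s, (s - τ) ^ (α - 1) * u τ :=
                stepA s hs
            _ ≤ A + (M / Real.Gamma α) * ∫ τ in (0:ℝ)..s, (s - τ) ^ (α - 1) * G τ := by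
                have hmono : (∫ τ in (0:ℝ)..s, (s - τ) ^ (α - 1) * u τ)
                    ≤ ∫ τ in (0:ℝ)..s, (s - τ) ^ (α - 1) * G τ := by
                  refine intervalIntegral.integral_mono_on hs0
                    (hInt s hs0 u (hu_cont.mono hIccs)) (hInt s hs0 G hGc.continuousOn)
                    fun τ hτ => ?_
                  exact mul_le_mul_of_nonneg_left (ih τ (hIccs hτ))
                    (Real.rpow_nonneg (by linarith [hτ.2]) _)
                have := mul_le_mul_of_nonneg_left hmono (by positivity : (0:ℝ) ≤ M / Real.Gamma α)
                linarith
            _ = A * (∑ k ∈ Finset.range (n+1), (M * s ^ α) ^ k / Real.Gamma (α * k + 1))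
                + C * ((M * s ^ α) ^ (n+1) / Real.Gamma (α * ((n+1:ℕ):ℝ) + 1)) := by
                rw [hIG, Finset.sum_range_succ']
                have hg0 : (M * s ^ α) ^ (0:ℕ) / Real.Gamma (α * (0:ℕ) + 1) = 1 := by
                  simp [Real.Gamma_one]
                rw [hg0]
                have hterm : ∀ (c : ℝ) (k : ℕ), (M / Real.Gamma α)
                    * (c * (M ^ k * s ^ (α * ((k:ℝ) + 1)) * Real.Gamma α
                        / Real.Gamma (α * ((k:ℝ) + 1) + 1)))
                    = c * ((M * s ^ α) ^ (k+1) / Real.Gamma (α * ((k+1 : ℕ):ℝ) + 1)) := by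
                  intro c k
                  have hp : (M * s ^ α) ^ (k+1) = M ^ (k+1) * s ^ (α * ((k:ℝ) + 1)) := by
                    rw [hpowτ (k+1) s hs0]
                    push_cast; ring_nf
                  rw [hp]
                  push_cast
                  field_simp
                  ring
                have hsum2 : (M / Real.Gamma α) * (A * ∑ k ∈ Finset.range n,
                      M ^ k * s ^ (α * ((k:ℝ) + 1)) * Real.Gamma α
                        / Real.Gamma (α * ((k:ℝ) + 1) + 1))
                    = A * ∑ k ∈ Finset.range n,
                        (M * s ^ α) ^ (k+1) / Real.Gamma (α * ((k+1 : ℕ):ℝ) + 1) := by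
                  rw [Finset.mul_sum, Finset.mul_sum, Finset.mul_sum]
                  refine Finset.sum_congr rfl fun k _ => ?_
                  rw [← hterm A k]
                rw [mul_add (M / Real.Gamma α), hsum2, hterm C n]
                push_cast
                ring
    -- Step C : pass to the limit
    have hsum : Summable (fun k : ℕ => (M * t ^ α) ^ k / Real.Gamma (α * k + 1)) :=
      summable_ML hα0 (by positivity)
    have hlim : Tendsto (fun n : ℕ =>
        A * (∑ k ∈ Finset.range n, (M * t ^ α) ^ k / Real.Gamma (α * k + 1))
          + C * ((M * t ^ α) ^ n / Real.Gamma (α * n + 1))) atTop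
        (𝓝 (A * mittagLeffler α (M * t ^ α) + C * 0)) := by
      refine Tendsto.add ?_ ?_
      · exact (hsum.hasSum.tendsto_sum_nat).const_mul A
      · exact (hsum.tendsto_atTop_zero).const_mul C
    have hfinal := ge_of_tendsto' hlim (fun n => key n t ⟨ht0, le_rfl⟩)
    simpa using hfinal
end

section
/- (All solutions of the planar rotation FDE vanish simultaneously) Let α ∈ (0,1) and let z* ∈ ℂ be a zero of the complex Mittag-Leffler function E_α, i.e. E_α(z*) = 0 (necessarily z* ∉ ℝ and z* ≠ 0). Let φ := arg(z*) ∈ (−π, π], let A be the 2×2 real matrix with rows (cos φ, sin φ) and (−sin φ, cos φ), and let T := |z*|^(1/α) > 0. Then every continuous function x : [0,∞) → ℝ² satisfying the Volterra integral equation x(t) = x(0) + (1/Γ(α)) ∫_0^t (t-τ)^(α-1) A x(τ) dτ for all t ≥ 0 satisfies x(T) = (0,0). -/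
open Real Set intervalIntegral
open MeasureTheory

/-- The complex Mittag-Leffler function `E_α(z) = ∑_{k=0}^∞ z^k / Γ(αk + 1)`, `z ∈ ℂ`. -/
noncomputable def mittagLefflerC (α : ℝ) (z : ℂ) : ℂ :=
  ∑' k : ℕ, z ^ k / Complex.Gamma ((α : ℂ) * k + 1)


lemma my_smul_cont {E : Type*} [NormedAddCommGroup E] [NormedSpace ℝ E]
    {f : ℝ → ℝ} {g : ℝ → E} {a b : ℝ}
    (hf : IntervalIntegrable f volume a b) (hg : ContinuousOn g (Set.uIcc a b)) :
    IntervalIntegrable (fun τ => f τ • g τ) volume a b := by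
  rw [intervalIntegrable_iff] at hf ⊢
  obtain ⟨C, hC⟩ := isCompact_uIcc.exists_bound_of_continuousOn hg
  exact MeasureTheory.Integrable.smul_of_top_left hf
    (MeasureTheory.memLp_top_of_bound
      ((hg.mono Set.uIoc_subset_uIcc).aestronglyMeasurable measurableSet_uIoc)
      C (ae_restrict_of_forall_mem measurableSet_uIoc
        fun τ hτ => hC τ (Set.uIoc_subset_uIcc hτ)))

lemma gamma_cont : ContinuousOn Real.Gamma (Set.Ici (1:ℝ)) := by
  intro y hy
  have hy1 : (1:ℝ) ≤ y := hy
  refine (Real.differentiableAt_Gamma ?_).continuousAt.continuousWithinAt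
  intro m h
  have : (0:ℝ) < y := lt_of_lt_of_le one_pos hy1
  rw [h] at this
  have : (0:ℝ) ≤ (m:ℝ) := Nat.cast_nonneg m
  linarith

lemma gamma_min : ∃ c > 0, ∀ y ∈ Set.Icc (1:ℝ) 2, c ≤ Real.Gamma y := by
  obtain ⟨y₀, hy₀, hmin⟩ := isCompact_Icc.exists_isMinOn (Set.nonempty_Icc.2 one_le_two)
    (gamma_cont.mono (fun y hy => hy.1 : Set.Icc (1:ℝ) 2 ⊆ Set.Ici 1))
  exact ⟨Real.Gamma y₀, Real.Gamma_pos_of_pos (lt_of_lt_of_le one_pos hy₀.1),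
    fun y hy => hmin hy⟩

lemma gamma_ge_fact : ∃ c > 0, ∀ x : ℝ, 1 ≤ x →
    c * (Nat.floor (x - 1)).factorial ≤ Real.Gamma x := by
  obtain ⟨c, hc, hmin⟩ := gamma_min
  refine ⟨c, hc, ?_⟩
  have aux : ∀ n : ℕ, ∀ x : ℝ, (n : ℝ) + 1 ≤ x → x < (n : ℝ) + 2 →
      c * n.factorial ≤ Real.Gamma x := by
    intro n
    induction n with
    | zero => intro x h1 h2
              push_cast at h1 h2
              simpa using hmin x ⟨by linarith, by linarith⟩
    | succ n ih =>
        intro x h1 h2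
        have hx1 : x - 1 ≠ 0 := by push_cast at h1; intro h; rw [sub_eq_zero] at h; 
                                   subst h; linarith [Nat.cast_nonneg (α := ℝ) n]
        have key : Real.Gamma x = (x - 1) * Real.Gamma (x - 1) := by
          have := Real.Gamma_add_one hx1
          rwa [sub_add_cancel] at this
        have ihx : c * n.factorial ≤ Real.Gamma (x - 1) := by
          refine ih (x - 1) ?_ ?_ <;> push_cast at h1 h2 ⊢ <;> linarith
        have hxn : (n : ℝ) + 1 ≤ x - 1 := by push_cast at h1; linarith
        calc c * (n + 1).factorial = ((n : ℝ) + 1) * (c * n.factorial) := by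
              push_cast [Nat.factorial_succ]; ring
          _ ≤ (x - 1) * (c * n.factorial) := by
              apply mul_le_mul_of_nonneg_right hxn (by positivity)
          _ ≤ (x - 1) * Real.Gamma (x - 1) := by
              apply mul_le_mul_of_nonneg_left ihx (by push_cast at h1; linarith [Nat.cast_nonneg (α := ℝ) n])
          _ = Real.Gamma x := key.symm
  intro x hx
  have h0 : (0:ℝ) ≤ x - 1 := by linarith
  have h1 := Nat.floor_le h0
  have h2 := Nat.lt_floor_add_one (x - 1)
  exact aux _ x (by linarith) (by linarith)


lemma pow_div_fact_le_exp (R : ℝ) (hR : 0 ≤ R) (n : ℕ) :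
    R ^ n ≤ Real.exp R * n.factorial := by
  have h1 : R ^ n / n.factorial ≤ Real.exp R := by
    calc R ^ n / n.factorial ≤ ∑ i ∈ Finset.range (n+1), R ^ i / i.factorial := by
          exact Finset.single_le_sum (f := fun i => R ^ i / (i.factorial : ℝ))
            (fun i _ => by positivity) (Finset.self_mem_range_succ n)
      _ ≤ Real.exp R := Real.sum_le_exp_of_nonneg hR _
  have hf : (0:ℝ) < n.factorial := by exact_mod_cast n.factorial_pos
  calc R ^ n = R ^ n / n.factorial * n.factorial := by field_simp
    _ ≤ Real.exp R * n.factorial := by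
        apply mul_le_mul_of_nonneg_right h1 hf.le

lemma summable_ml (α : ℝ) (hα : 0 < α) (r : ℝ) (hr : 0 ≤ r) :
    Summable (fun k : ℕ => r ^ k / Real.Gamma (α * k + 1)) := by
  obtain ⟨c, hc, hG⟩ := gamma_ge_fact
  set R : ℝ := (2 * r + 2) ^ (1 / α) with hRdef
  have h2r : (1:ℝ) < 2 * r + 2 := by linarith
  have hR1 : 1 < R := Real.one_lt_rpow_iff_of_pos (by linarith) |>.2 (Or.inl ⟨h2r, by positivity⟩)
  have hR0 : (0:ℝ) < R := lt_trans one_pos hR1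
  have hRα : ∀ k : ℕ, R ^ (α * k) = (2 * r + 2) ^ k := by
    intro k
    rw [hRdef, ← Real.rpow_mul (by linarith : (0:ℝ) ≤ 2*r+2),
      show 1/α*(α*(k:ℝ)) = (k:ℝ) by field_simp,
      Real.rpow_natCast]
  have key : ∀ k : ℕ, r ^ k / Real.Gamma (α * k + 1)
      ≤ (Real.exp R * R / c) * (r / (2 * r + 2)) ^ k := by
    intro k
    have hak : (0:ℝ) ≤ α * k := by positivity
    have hfl : Nat.floor (α * (k:ℝ) + 1 - 1) = Nat.floor (α * (k:ℝ)) := by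
      norm_num
    have hG1 : c * (Nat.floor (α * (k:ℝ))).factorial ≤ Real.Gamma (α * k + 1) := by
      have := hG (α * k + 1) (by linarith)
      rwa [hfl] at this
    -- R ^ (α k) / (R * exp R) ≤ (floor)!
    have h3 : R ^ (α * (k:ℝ)) / R ≤ R ^ (Nat.floor (α * (k:ℝ)) : ℕ) := by
      rw [← Real.rpow_natCast R, ← Real.rpow_sub_one hR0.ne']
      apply Real.rpow_le_rpow_of_exponent_le hR1.le
      have := Nat.sub_one_lt_floor (α * (k:ℝ))
      linarith
    have h4 : R ^ (Nat.floor (α * (k:ℝ)) : ℕ) ≤ Real.exp R * (Nat.floor (α * (k:ℝ))).factorial :=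
      pow_div_fact_le_exp R hR0.le _
    have h5 : (2 * r + 2) ^ k / (R * Real.exp R) ≤ ((Nat.floor (α * (k:ℝ))).factorial : ℝ) := by
      rw [div_le_iff₀ (by positivity)]
      calc (2 * r + 2) ^ k = R ^ (α * (k:ℝ)) := (hRα k).symm
        _ = R ^ (α * (k:ℝ)) / R * R := by field_simp
        _ ≤ R ^ (Nat.floor (α * (k:ℝ)) : ℕ) * R := by
            apply mul_le_mul_of_nonneg_right h3 hR0.le
        _ ≤ Real.exp R * (Nat.floor (α * (k:ℝ))).factorial * R := by
            apply mul_le_mul_of_nonneg_right h4 hR0.le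
        _ = ((Nat.floor (α * (k:ℝ))).factorial : ℝ) * (R * Real.exp R) := by ring
    have hΓpos : (0:ℝ) < Real.Gamma (α * k + 1) := Real.Gamma_pos_of_pos (by linarith)
    have h6 : c * ((2 * r + 2) ^ k / (R * Real.exp R)) ≤ Real.Gamma (α * k + 1) := by
      calc c * ((2 * r + 2) ^ k / (R * Real.exp R))
          ≤ c * (Nat.floor (α * (k:ℝ))).factorial := by
            apply mul_le_mul_of_nonneg_left h5 hc.le
        _ ≤ _ := hG1
    calc r ^ k / Real.Gamma (α * k + 1)
        ≤ r ^ k / (c * ((2 * r + 2) ^ k / (R * Real.exp R))) := by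
          apply div_le_div_of_nonneg_left (by positivity) (by positivity) h6
      _ = (Real.exp R * R / c) * (r / (2 * r + 2)) ^ k := by
          rw [div_pow]
          field_simp
  have hsum : Summable (fun k : ℕ => (Real.exp R * R / c) * (r / (2 * r + 2)) ^ k) := by
    apply Summable.mul_left
    apply summable_geometric_of_lt_one (by positivity)
    rw [div_lt_one (by linarith)]
    linarith
  exact hsum.of_nonneg_of_le (fun k => by positivity) key


lemma beta_aux {a b t : ℝ} (ha : 0 < a) (hb : 0 ≤ b) (ht : 0 < t) :
    ∫ τ in (0:ℝ)..t, (t - τ) ^ (a - 1) * τ ^ b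
      = Real.Gamma a * Real.Gamma (b + 1) / Real.Gamma (a + b + 1) * t ^ (a + b) := by
  have hsc := Complex.betaIntegral_scaled ((b:ℂ) + 1) (a:ℂ) ht
  have hgam := Complex.Gamma_mul_Gamma_eq_betaIntegral (s := (b:ℂ) + 1) (t := (a:ℂ))
    (by simp; linarith) (by simpa using ha)
  have hΓne : Complex.Gamma ((b:ℂ) + 1 + a) ≠ 0 := by
    rw [show (b:ℂ) + 1 + (a:ℂ) = ((b + 1 + a : ℝ) : ℂ) by push_cast; ring,
      Complex.Gamma_ofReal]
    exact_mod_cast (Real.Gamma_pos_of_pos (by linarith)).ne'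
  have hbeta : Complex.betaIntegral ((b:ℂ) + 1) (a:ℂ)
      = Complex.Gamma ((b:ℂ) + 1) * Complex.Gamma (a:ℂ) / Complex.Gamma ((b:ℂ) + 1 + a) := by
    rw [eq_div_iff hΓne, mul_comm, ← hgam]
  -- identify the complex integral with the coerced real integral
  have hint : (((∫ τ in (0:ℝ)..t, (t - τ) ^ (a - 1) * τ ^ b) : ℝ) : ℂ)
      = ∫ τ in (0:ℝ)..t, (τ:ℂ) ^ ((b:ℂ) + 1 - 1) * ((t:ℂ) - τ) ^ ((a:ℂ) - 1) := by
    rw [← intervalIntegral.integral_ofReal,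
      intervalIntegral.integral_of_le ht.le, intervalIntegral.integral_of_le ht.le]
    apply setIntegral_congr_fun measurableSet_Ioc
    intro τ hτ
    have hτ0 : 0 ≤ τ := le_of_lt hτ.1
    have htτ : 0 ≤ t - τ := by linarith [hτ.2]
    push_cast
    rw [show (b:ℂ) + 1 - 1 = ((b:ℝ):ℂ) by ring,
      ← Complex.ofReal_cpow hτ0, show (a:ℂ) - 1 = ((a - 1 : ℝ):ℂ) by push_cast; ring,
      show (t:ℂ) - (τ:ℂ) = ((t - τ : ℝ):ℂ) by push_cast; ring,
      ← Complex.ofReal_cpow htτ]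
    push_cast
    ring
  rw [hsc, hbeta] at hint
  have hexp : ((b:ℂ) + 1 + a - 1) = (((a + b : ℝ)) : ℂ) := by push_cast; ring
  rw [hexp, ← Complex.ofReal_cpow ht.le,
    show (b:ℂ) + 1 = (((b + 1 : ℝ)) : ℂ) by push_cast; ring,
    show (((b+1:ℝ)):ℂ) + (a:ℂ) = (((a + b + 1 : ℝ)) : ℂ) by push_cast; ring,
    Complex.Gamma_ofReal, Complex.Gamma_ofReal, Complex.Gamma_ofReal] at hint
  have := hint
  rw [show ((t ^ (a+b) : ℝ) : ℂ) * ((Real.Gamma (b+1) : ℂ) * (Real.Gamma a : ℂ) / (Real.Gamma (a+b+1) : ℂ))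
      = (((Real.Gamma a * Real.Gamma (b+1) / Real.Gamma (a+b+1) * t ^ (a+b) : ℝ)) : ℂ) by
        push_cast; ring] at this
  exact_mod_cast this


lemma ker_int {a : ℝ} (ha : 0 < a) (t : ℝ) :
    IntervalIntegrable (fun τ => (t - τ) ^ (a - 1)) volume 0 t := by
  have h := intervalIntegral.intervalIntegrable_rpow' (a := t) (b := 0)
    (r := a - 1) (by linarith)
  simpa using h.comp_sub_left t

lemma rpow_cont {b : ℝ} (hb : 0 ≤ b) : Continuous (fun τ : ℝ => τ ^ b) :=
  continuous_iff_continuousAt.mpr fun τ => Real.continuousAt_rpow_const τ b (Or.inr hb)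

lemma ker_pow_int {a b : ℝ} (ha : 0 < a) (hb : 0 ≤ b) (t : ℝ) :
    IntervalIntegrable (fun τ => (t - τ) ^ (a - 1) * τ ^ b) volume 0 t :=
  (ker_int ha t).mul_continuousOn (rpow_cont hb).continuousOn

lemma IntervalIntegrable.ofReal' {f : ℝ → ℝ} {a b : ℝ}
    (h : IntervalIntegrable f volume a b) :
    IntervalIntegrable (fun x => (f x : ℂ)) volume a b :=
  ⟨h.1.ofReal, h.2.ofReal⟩


lemma volterra_key
    (α : ℝ) (hα0 : 0 < α) (T : ℝ) (hT0 : 0 < T)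
    (lam : ℂ) (hlam : ‖lam‖ = 1)
    (z : ℝ → ℂ) (hzc : ContinuousOn z (Set.Ici 0))
    (hz : ∀ t, 0 ≤ t → z t = z 0 +
        (1 / Real.Gamma α) • ∫ τ in (0:ℝ)..t, ((t - τ) ^ (α - 1) : ℝ) • (lam * z τ))
    (M : ℝ) (hM : ∀ t ∈ Set.Icc (0:ℝ) T, ‖z t‖ ≤ M) :
    ∀ n : ℕ, ∀ t ∈ Set.Icc (0:ℝ) T,
      ‖z t - z 0 * ∑ k ∈ Finset.range n,
          lam ^ k * ((t ^ (α * k) : ℝ) : ℂ) / ((Real.Gamma (α * k + 1) : ℝ) : ℂ)‖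
        ≤ M * (t ^ (α * n) / Real.Gamma (α * n + 1)) := by
  have hΓα : 0 < Real.Gamma α := Real.Gamma_pos_of_pos hα0
  set S : ℕ → ℝ → ℂ := fun n t => ∑ k ∈ Finset.range n,
      lam ^ k * ((t ^ (α * k) : ℝ) : ℂ) / ((Real.Gamma (α * k + 1) : ℝ) : ℂ) with hSdef
  have hScont : ∀ n, Continuous (fun t => S n t) := by
    intro n
    apply continuous_finset_sum
    intro k _
    exact (continuous_const.mul (Complex.continuous_ofReal.comp (rpow_cont (by positivity)))).div_const _
  have hsubset : ∀ t : ℝ, 0 ≤ t → Set.uIcc (0:ℝ) t ⊆ Set.Ici 0 := by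
    intro t ht
    rw [Set.uIcc_of_le ht]
    exact Set.Icc_subset_Ici_self
  -- integrability of the main integrand
  have I1 : ∀ t, 0 ≤ t →
      IntervalIntegrable (fun τ => ((t - τ) ^ (α - 1) : ℝ) • (lam * z τ)) volume 0 t := by
    intro t ht
    exact my_smul_cont (ker_int hα0 t)
      ((continuous_const.continuousOn).mul (hzc.mono (hsubset t ht)))
  have I2 : ∀ n t, 0 ≤ t →
      IntervalIntegrable (fun τ => ((t - τ) ^ (α - 1) : ℝ) • (lam * (z 0 * S n τ))) volume 0 t := by
    intro n t ht
    exact my_smul_cont (ker_int hα0 t)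
      ((continuous_const.continuousOn).mul
        ((continuous_const.continuousOn).mul (hScont n).continuousOn))
  -- the algebraic identity
  have ID : ∀ n : ℕ, ∀ t : ℝ, 0 < t → z 0 * S (n+1) t
      = z 0 + (1 / Real.Gamma α) •
          ∫ τ in (0:ℝ)..t, ((t - τ) ^ (α - 1) : ℝ) • (lam * (z 0 * S n τ)) := by
    intro n t ht
    have hrw : (fun τ => ((t - τ) ^ (α - 1) : ℝ) • (lam * (z 0 * S n τ)))
        = fun τ => ∑ k ∈ Finset.range n,
            (lam * z 0 * lam ^ k / ((Real.Gamma (α * k + 1) : ℝ) : ℂ))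
              * ((((t - τ) ^ (α - 1) * τ ^ (α * k)) : ℝ) : ℂ) := by
      funext τ
      rw [hSdef]
      simp only [Finset.mul_sum, Finset.smul_sum]
      apply Finset.sum_congr rfl
      intro k _
      rw [Complex.real_smul]
      push_cast
      ring
    rw [hrw, intervalIntegral.integral_finset_sum (fun k _ =>
      ((ker_pow_int hα0 (by positivity) t).ofReal'.const_mul _))]
    have hterm : ∀ k ∈ Finset.range n,
        (lam * z 0 * lam ^ k / ((Real.Gamma (α * k + 1) : ℝ) : ℂ))
            * ∫ τ in (0:ℝ)..t, ((((t - τ) ^ (α - 1) * τ ^ (α * k)) : ℝ) : ℂ)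
        = z 0 * (Real.Gamma α : ℂ) *
            (lam ^ (k+1) * ((t ^ (α * (k+1)) : ℝ) : ℂ) / ((Real.Gamma (α * (k+1) + 1) : ℝ) : ℂ)) := by
      intro k _
      rw [intervalIntegral.integral_ofReal, beta_aux hα0 (by positivity) ht]
      have hΓk : Real.Gamma (α * k + 1) ≠ 0 :=
        (Real.Gamma_pos_of_pos (by positivity)).ne'
      have hΓk1 : Real.Gamma (α * (k+1) + 1) ≠ 0 :=
        (Real.Gamma_pos_of_pos (by positivity)).ne'
      have hA : ((Real.Gamma (α * k + 1) : ℝ) : ℂ) ≠ 0 := Complex.ofReal_ne_zero.mpr hΓk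
      have hB : ((Real.Gamma (α * (k+1) + 1) : ℝ) : ℂ) ≠ 0 := Complex.ofReal_ne_zero.mpr hΓk1
      push_cast
      rw [show α + α * (k:ℝ) = α * ((k:ℝ) + 1) by ring]
      push_cast at hA hB
      field_simp
      ring
    simp only [intervalIntegral.integral_const_mul]
    rw [Finset.sum_congr rfl hterm, ← Finset.mul_sum]
    have hΓαne : ((Real.Gamma α : ℝ) : ℂ) ≠ 0 := Complex.ofReal_ne_zero.mpr hΓα.ne'
    have hpull : ∀ W : ℂ, (1 / Real.Gamma α) • (z 0 * ((Real.Gamma α : ℝ) : ℂ) * W) = z 0 * W := by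
      intro W
      rw [Complex.real_smul]
      push_cast
      field_simp
    rw [hpull, hSdef]
    simp only []
    rw [Finset.sum_range_succ']
    have h0 : lam ^ 0 * ((t ^ (α * ((0:ℕ):ℝ)) : ℝ) : ℂ) / ((Real.Gamma (α * ((0:ℕ):ℝ) + 1) : ℝ) : ℂ) = 1 := by
      norm_num [Real.Gamma_one]
    rw [h0]
    push_cast
    ring
  suffices key : ∀ n : ℕ, ∀ t ∈ Set.Icc (0:ℝ) T,
      ‖z t - z 0 * S n t‖ ≤ M * (t ^ (α * n) / Real.Gamma (α * n + 1)) by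
    intro n t ht
    simpa [hSdef] using key n t ht
  intro n
  induction n with
  | zero =>
      intro t htT
      rw [hSdef]
      simp only [Finset.range_zero, Finset.sum_empty, mul_zero, sub_zero]
      rw [Nat.cast_zero, mul_zero, Real.rpow_zero, zero_add, Real.Gamma_one]
      simpa using hM t htT
  | succ n ih =>
      intro t htT
      obtain ⟨ht0, htT'⟩ := htT
      rcases eq_or_lt_of_le ht0 with h0 | h0
      · -- t = 0
        have hS0 : S (n+1) (0:ℝ) = 1 := by
          rw [hSdef]
          simp only []
          rw [Finset.sum_eq_single_of_mem 0 (Finset.mem_range.mpr (Nat.succ_pos n))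
            (fun k _ hk => by
              rw [Real.zero_rpow
                (ne_of_gt (mul_pos hα0 (by exact_mod_cast Nat.pos_of_ne_zero hk))),
                Complex.ofReal_zero, mul_zero, zero_div])]
          norm_num [Real.Gamma_one]
        rw [← h0]
        rw [hS0, mul_one, sub_self, norm_zero]
        rw [Real.zero_rpow (ne_of_gt (mul_pos hα0 (by positivity)))]
        simp
      · -- 0 < t
        have heq : z t - z 0 * S (n+1) t
            = (1 / Real.Gamma α) •
                ∫ τ in (0:ℝ)..t, ((t - τ) ^ (α - 1) : ℝ) • (lam * (z τ - z 0 * S n τ)) := by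
          rw [hz t ht0, ID n t h0, add_sub_add_left_eq_sub, ← smul_sub,
            ← intervalIntegral.integral_sub (I1 t ht0) (I2 n t ht0)]
          congr 1
          apply intervalIntegral.integral_congr
          intro τ _
          simp only [← smul_sub, ← mul_sub]
        rw [heq, norm_smul, Real.norm_eq_abs, abs_of_pos (by positivity)]
        have hΓn : 0 < Real.Gamma (α * n + 1) := Real.Gamma_pos_of_pos (by positivity)
        have hΓn1 : 0 < Real.Gamma (α * (n+1) + 1) := Real.Gamma_pos_of_pos (by positivity)
        set C : ℝ := M / Real.Gamma (α * n + 1) with hC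
        have hM0 : 0 ≤ M := le_trans (norm_nonneg _) (hM 0 ⟨le_rfl, hT0.le⟩)
        have hC0 : 0 ≤ C := by positivity
        have hbound : ‖∫ τ in (0:ℝ)..t, ((t - τ) ^ (α - 1) : ℝ) • (lam * (z τ - z 0 * S n τ))‖
            ≤ |∫ τ in (0:ℝ)..t, ((t - τ) ^ (α - 1) * τ ^ (α * n)) * C| := by
          apply intervalIntegral.norm_integral_le_abs_of_norm_le
          · apply ae_restrict_of_forall_mem measurableSet_uIoc
            intro τ hτ
            rw [Set.uIoc_of_le ht0] at hτ
            have hτ0 : 0 < τ := hτ.1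
            have hτt : τ ≤ t := hτ.2
            rw [norm_smul, Real.norm_eq_abs,
              abs_of_nonneg (Real.rpow_nonneg (by linarith) _), norm_mul,
              hlam, one_mul]
            have hle := ih τ ⟨hτ0.le, le_trans hτt htT'⟩
            calc (t - τ) ^ (α - 1) * ‖z τ - z 0 * S n τ‖
                ≤ (t - τ) ^ (α - 1) * (M * (τ ^ (α * n) / Real.Gamma (α * n + 1))) := by
                  apply mul_le_mul_of_nonneg_left hle (Real.rpow_nonneg (by linarith) _)
              _ = (t - τ) ^ (α - 1) * τ ^ (α * n) * C := by rw [hC]; ring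
          · exact (ker_pow_int hα0 (by positivity) t).mul_const _
        have hval : ∫ τ in (0:ℝ)..t, ((t - τ) ^ (α - 1) * τ ^ (α * n)) * C
            = Real.Gamma α * Real.Gamma (α * n + 1) / Real.Gamma (α + α * n + 1)
                * t ^ (α + α * n) * C := by
          rw [intervalIntegral.integral_mul_const, beta_aux hα0 (by positivity) h0]
        have hexp : α + α * (n:ℝ) = α * ((n:ℕ)+1:ℕ) := by push_cast; ring
        calc (1 / Real.Gamma α) * ‖∫ τ in (0:ℝ)..t, ((t - τ) ^ (α - 1) : ℝ) • (lam * (z τ - z 0 * S n τ))‖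
            ≤ (1 / Real.Gamma α) * |∫ τ in (0:ℝ)..t, ((t - τ) ^ (α - 1) * τ ^ (α * n)) * C| := by
              apply mul_le_mul_of_nonneg_left hbound (by positivity)
          _ = M * (t ^ (α * ((n:ℕ)+1:ℕ)) / Real.Gamma (α * ((n:ℕ)+1:ℕ) + 1)) := by
              rw [hval, abs_of_nonneg (by positivity), hC, ← hexp]
              have h1 : Real.Gamma (α + α * n + 1) = Real.Gamma (α * ((n:ℕ)+1:ℕ) + 1) := by
                rw [hexp]
              rw [h1, ← hexp]
              field_simp

noncomputable def Lmap : (Fin 2 → ℝ) →L[ℝ] ℂ :=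
  LinearMap.toContinuousLinearMap
    { toFun := fun v => (v 0 : ℂ) + (v 1 : ℂ) * Complex.I,
      map_add' := fun v w => by push_cast [Pi.add_apply]; ring,
      map_smul' := fun c v => by
        push_cast [Pi.smul_apply, smul_eq_mul, Complex.real_smul]
        simp only [id_eq]
        ring }

lemma Lmap_apply (v : Fin 2 → ℝ) : Lmap v = (v 0 : ℂ) + (v 1 : ℂ) * Complex.I := rfl

/-- All solutions of the planar rotation Caputo FDE vanish simultaneously: if `E_α(z*) = 0`,
`φ = arg z*`, `A = [[cos φ, sin φ], [-sin φ, cos φ]]` and `T = |z*|^(1/α)`, then `T > 0` and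
every continuous solution of the associated Volterra integral equation on `[0, ∞)` satisfies
`x(T) = (0, 0)`. -/
theorem planar_rotation_fde_all_solutions_vanish
    (α : ℝ) (hα : α ∈ Set.Ioo (0 : ℝ) 1)
    (zstar : ℂ) (hzstar : mittagLefflerC α zstar = 0)
    (φ : ℝ) (hφ : φ = Complex.arg zstar)
    (A : Matrix (Fin 2) (Fin 2) ℝ)
    (hA : A = !![Real.cos φ, Real.sin φ; -Real.sin φ, Real.cos φ])
    (T : ℝ) (hT : T = ‖zstar‖ ^ (1 / α)) :
    0 < T ∧
    ∀ x : ℝ → Fin 2 → ℝ, ContinuousOn x (Set.Ici 0) →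
      (∀ t ∈ Set.Ici (0 : ℝ),
        x t = x 0 + (1 / Real.Gamma α) •
          ∫ τ in (0 : ℝ)..t, (t - τ) ^ (α - 1) • A.mulVec (x τ)) →
      x T = ![0, 0] := by
  obtain ⟨hα0, hα1⟩ := hα
  have hΓα : 0 < Real.Gamma α := Real.Gamma_pos_of_pos hα0
  -- `zstar ≠ 0`
  have hz0 : zstar ≠ 0 := by
    intro h
    rw [h] at hzstar
    have h1 : mittagLefflerC α 0 = 1 := by
      rw [mittagLefflerC, tsum_eq_single 0 (fun k hk => by simp [zero_pow hk])]
      simp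
    rw [hzstar] at h1
    exact zero_ne_one h1
  have hr0 : 0 < ‖zstar‖ := norm_pos_iff.mpr hz0
  have hT0 : 0 < T := by rw [hT]; exact Real.rpow_pos_of_pos hr0 _
  have hTα : T ^ α = ‖zstar‖ := by
    rw [hT, ← Real.rpow_mul hr0.le, one_div, inv_mul_cancel₀ hα0.ne', Real.rpow_one]
  refine ⟨hT0, ?_⟩
  intro x hx hxeq
  -- `lam`
  set lam : ℂ := (Real.cos φ : ℂ) - (Real.sin φ : ℂ) * Complex.I with hlam
  have hlam_abs : ‖lam‖ = 1 := by
    have h1 : lam.re = Real.cos φ := by simp [hlam, Complex.cos_ofReal_re]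
    have h2 : lam.im = -Real.sin φ := by simp [hlam, Complex.sin_ofReal_re]
    rw [Complex.norm_def, Complex.normSq_apply, h1, h2]
    rw [show Real.cos φ * Real.cos φ + -Real.sin φ * -Real.sin φ = 1 by
      have := Real.sin_sq_add_cos_sq φ; ring_nf; ring_nf at this; linarith]
    exact Real.sqrt_one
  have hkey : lam * (‖zstar‖ : ℂ) = (starRingEnd ℂ) zstar := by
    have h := Complex.norm_mul_cos_add_sin_mul_I zstar
    rw [← hφ, ← Complex.ofReal_cos, ← Complex.ofReal_sin] at h
    have h2 := congrArg (starRingEnd ℂ) h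
    rw [map_mul, map_add, map_mul] at h2
    simp only [Complex.conj_ofReal, Complex.conj_I] at h2
    rw [← h2, hlam]
    ring
  -- `Lmap` intertwines `A` and multiplication by `lam`
  have hLA : ∀ v : Fin 2 → ℝ, Lmap (A.mulVec v) = lam * Lmap v := by
    intro v
    have h0 : (A.mulVec v) 0 = Real.cos φ * v 0 + Real.sin φ * v 1 := by
      simp [hA, Matrix.mulVec, dotProduct, Fin.sum_univ_two]
    have h1 : (A.mulVec v) 1 = -Real.sin φ * v 0 + Real.cos φ * v 1 := by
      simp [hA, Matrix.mulVec, dotProduct, Fin.sum_univ_two]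
    rw [Lmap_apply, Lmap_apply, h0, h1, hlam]
    push_cast
    ring_nf
    rw [Complex.I_sq]
    ring
  -- the complexified solution
  set z : ℝ → ℂ := fun t => Lmap (x t) with hzdef
  have hzc : ContinuousOn z (Set.Ici 0) := Lmap.continuous.comp_continuousOn hx
  have hAcont : ContinuousOn (fun τ => A.mulVec (x τ)) (Set.Ici 0) := by
    have : Continuous (A.mulVecLin : (Fin 2 → ℝ) →ₗ[ℝ] (Fin 2 → ℝ)) :=
      LinearMap.continuous_of_finiteDimensional _
    exact this.comp_continuousOn hx
  have hsubset : ∀ t : ℝ, 0 ≤ t → Set.uIcc (0:ℝ) t ⊆ Set.Ici 0 := by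
    intro t ht
    rw [Set.uIcc_of_le ht]
    exact Set.Icc_subset_Ici_self
  have hFi : ∀ t : ℝ, 0 ≤ t →
      IntervalIntegrable (fun τ => (t - τ) ^ (α - 1) • A.mulVec (x τ)) volume 0 t := by
    intro t ht
    exact my_smul_cont (ker_int hα0 t) (hAcont.mono (hsubset t ht))
  have hz : ∀ t, 0 ≤ t → z t = z 0 +
      (1 / Real.Gamma α) • ∫ τ in (0:ℝ)..t, ((t - τ) ^ (α - 1) : ℝ) • (lam * z τ) := by
    intro t ht
    have happ := congrArg Lmap (hxeq t ht)
    rw [map_add, _root_.map_smul, ← Lmap.intervalIntegral_comp_comm (hFi t ht)] at happ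
    rw [hzdef]
    simp only []
    rw [happ]
    congr 1
    congr 1
    apply intervalIntegral.integral_congr
    intro τ _
    simp only []
    rw [_root_.map_smul, hLA]
  -- bound on `[0, T]`
  obtain ⟨M, hM⟩ := (isCompact_Icc : IsCompact (Set.Icc (0:ℝ) T)).exists_bound_of_continuousOn
    (hzc.mono Set.Icc_subset_Ici_self)
  -- the key estimate
  have key := volterra_key α hα0 T hT0 lam hlam_abs z hzc hz M hM
  -- passage to the limit at `t = T`
  have hrT : ∀ n : ℕ, T ^ (α * n) = ‖zstar‖ ^ n := by
    intro n
    rw [← hTα, ← Real.rpow_natCast (T ^ α) n, ← Real.rpow_mul hT0.le]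
  have hb0 : Filter.Tendsto (fun n : ℕ => M * (T ^ (α * n) / Real.Gamma (α * n + 1)))
      Filter.atTop (nhds 0) := by
    have h1 : Filter.Tendsto (fun n : ℕ => ‖zstar‖ ^ n / Real.Gamma (α * n + 1))
        Filter.atTop (nhds 0) :=
      (summable_ml α hα0 (‖zstar‖) hr0.le).tendsto_atTop_zero
    have h2 := h1.const_mul M
    rw [mul_zero] at h2
    refine h2.congr fun n => ?_
    rw [hrT n]
  -- the partial sums at `T` equal partial sums of the ML series at `conj zstar`
  set w : ℂ := (starRingEnd ℂ) zstar with hw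
  have hST : ∀ n : ℕ, (∑ k ∈ Finset.range n,
        lam ^ k * ((T ^ (α * k) : ℝ) : ℂ) / ((Real.Gamma (α * k + 1) : ℝ) : ℂ))
      = ∑ k ∈ Finset.range n, w ^ k / ((Real.Gamma (α * k + 1) : ℝ) : ℂ) := by
    intro n
    apply Finset.sum_congr rfl
    intro k _
    rw [hrT k]
    push_cast
    rw [← mul_pow, hkey]
  have hwsum : Summable (fun k : ℕ => w ^ k / ((Real.Gamma (α * k + 1) : ℝ) : ℂ)) := by
    apply Summable.of_norm
    have : ∀ k : ℕ, ‖w ^ k / ((Real.Gamma (α * k + 1) : ℝ) : ℂ)‖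
        = ‖zstar‖ ^ k / Real.Gamma (α * k + 1) := by
      intro k
      have hΓk : 0 < Real.Gamma (α * k + 1) := Real.Gamma_pos_of_pos (by positivity)
      rw [norm_div, norm_pow, hw,
        Complex.norm_conj, Complex.norm_real, Real.norm_eq_abs, abs_of_pos hΓk]
    simp only [this]
    exact summable_ml α hα0 (‖zstar‖) hr0.le
  have htsum : ∑' k : ℕ, w ^ k / ((Real.Gamma (α * k + 1) : ℝ) : ℂ) = 0 := by
    have hterm : ∀ k : ℕ, w ^ k / ((Real.Gamma (α * k + 1) : ℝ) : ℂ)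
        = star (zstar ^ k / Complex.Gamma ((α : ℂ) * k + 1)) := by
      intro k
      have hG : Complex.Gamma ((α : ℂ) * k + 1) = ((Real.Gamma (α * k + 1) : ℝ) : ℂ) := by
        rw [show ((α : ℂ) * k + 1) = ((α * k + 1 : ℝ) : ℂ) by push_cast; ring,
          Complex.Gamma_ofReal]
      rw [star_div₀, star_pow, hG]
      simp only [RCLike.star_def, Complex.conj_ofReal]
      rfl
    simp only [hterm]
    rw [← tsum_star]
    rw [show (∑' k : ℕ, zstar ^ k / Complex.Gamma ((α : ℂ) * k + 1)) = mittagLefflerC α zstar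
      from rfl, hzstar]
    exact star_zero ℂ
  have hlim1 : Filter.Tendsto (fun n : ℕ => z 0 * ∑ k ∈ Finset.range n,
      lam ^ k * ((T ^ (α * k) : ℝ) : ℂ) / ((Real.Gamma (α * k + 1) : ℝ) : ℂ))
      Filter.atTop (nhds 0) := by
    have h1 := (hwsum.hasSum.tendsto_sum_nat).const_mul (z 0)
    rw [htsum, mul_zero] at h1
    refine h1.congr fun n => ?_
    rw [hST n]
  have hlim2 : Filter.Tendsto (fun n : ℕ => z 0 * ∑ k ∈ Finset.range n,
      lam ^ k * ((T ^ (α * k) : ℝ) : ℂ) / ((Real.Gamma (α * k + 1) : ℝ) : ℂ))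
      Filter.atTop (nhds (z T)) := by
    rw [tendsto_iff_norm_sub_tendsto_zero]
    apply squeeze_zero (fun n => norm_nonneg _) (fun n => ?_) hb0
    rw [norm_sub_rev]
    exact key n T ⟨hT0.le, le_refl T⟩
  have hzT : z T = 0 := tendsto_nhds_unique hlim2 hlim1
  -- extract the components
  have h0 : (x T 0 : ℂ) + (x T 1 : ℂ) * Complex.I = 0 := by
    rw [← Lmap_apply]
    exact hzT
  have hre := congrArg Complex.re h0
  have him := congrArg Complex.im h0
  simp at hre him
  funext i
  fin_cases i
  · simpa using hre
  · simpa using him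
end
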